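/- Let ω = e^{2πi/3} and let λ ∈ ℂ∖{0} with Im λ ≥ 0, z = λ^{1/3}, and assume |λ^{1/3} − 2πn/√3| ≥ 1 for every integer n ≥ 0 and |(−λ)^{1/3} − 2πn/√3| ≥ 1 for every integer n ≥ 1 (cube roots with argument in (−π/3, π/3]). Then |Δ₀(λ)| > |e^{(ω²+2)z}| / (24√3 |λ|). -/

import Mathlib

open Complex

/-- The characteristic function of the unperturbed three-point Dirichlet problem:
`Δ₀(λ) = (4/(3√3 λ)) sin(√3z/2)(cosh(3z/2) − cos(√3z/2))`, `z = λ^{1/3}` the cube root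
with argument in `(−π/3, π/3]`. -/
noncomputable def Delta0 (lam : ℂ) : ℂ :=
  4 / (3 * (Real.sqrt 3 : ℂ) * lam) *
    Complex.sin ((Real.sqrt 3 : ℂ) * lam ^ ((1:ℂ)/3) / 2) *
    (Complex.cosh (3 * lam ^ ((1:ℂ)/3) / 2)
      - Complex.cos ((Real.sqrt 3 : ℂ) * lam ^ ((1:ℂ)/3) / 2))

lemma delta0aux_abs_sin_sq (w : ℂ) :
    ‖Complex.sin w‖ ^ 2 = Real.sin w.re ^ 2 + Real.sinh w.im ^ 2 := by
  rw [Complex.sq_norm, Complex.sin_eq, ← Complex.ofReal_sin, ← Complex.ofReal_cos,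
    ← Complex.ofReal_sinh, ← Complex.ofReal_cosh, Complex.normSq_apply]
  simp only [Complex.add_re, Complex.add_im, Complex.mul_re, Complex.mul_im,
    Complex.I_re, Complex.I_im, Complex.ofReal_re, Complex.ofReal_im]
  have h1 := Real.sin_sq_add_cos_sq w.re
  have h2 := Real.cosh_sq w.im
  nlinarith [h1, h2]

lemma delta0aux_two_lt_exp : (2:ℝ) < Real.exp (3/4) := by
  have h3 : Real.exp (3/4) ^ 4 = Real.exp 1 ^ 3 := by
    rw [← Real.exp_nat_mul, ← Real.exp_nat_mul]; norm_num
  have he := Real.exp_one_gt_d9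
  have hc : (2.7182818283:ℝ)^3 ≤ Real.exp 1 ^ 3 := pow_le_pow_left₀ (by norm_num) he.le 3
  refine lt_of_pow_lt_pow_left₀ 4 (Real.exp_pos _).le ?_
  rw [h3]; nlinarith [hc]

lemma delta0aux_sin_lower_of_im (w : ℂ) (h : 3/8 ≤ |w.im|) :
    Real.exp |w.im| / 4 < ‖Complex.sin w‖ := by
  have hs : Real.sinh |w.im| ≤ ‖Complex.sin w‖ := by
    have h2 : Real.sinh |w.im| ^ 2 ≤ ‖Complex.sin w‖ ^ 2 := by
      rw [delta0aux_abs_sin_sq]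
      have : Real.sinh |w.im| ^ 2 = Real.sinh w.im ^ 2 := by
        rcases abs_choice w.im with h' | h' <;> rw [h'] <;> simp [Real.sinh_neg]
      nlinarith [sq_nonneg (Real.sin w.re)]
    have h0 : 0 ≤ Real.sinh |w.im| := Real.sinh_nonneg_iff.2 (abs_nonneg _)
    nlinarith [norm_nonneg (Complex.sin w)]
  refine lt_of_lt_of_le ?_ hs
  rw [Real.sinh_eq]
  have h2 : (2:ℝ) < Real.exp |w.im| * Real.exp |w.im| := by
    rw [← Real.exp_add]
    exact lt_of_lt_of_le delta0aux_two_lt_exp (Real.exp_le_exp.2 (by linarith))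
  have hmul : Real.exp (-|w.im|) * Real.exp |w.im| = 1 := by
    rw [← Real.exp_add]; simp
  nlinarith [Real.exp_pos |w.im|, Real.exp_pos (-|w.im|)]

lemma delta0aux_exp_half_lt : Real.exp (1/2:ℝ) < 5/3 := by
  have h : Real.exp (1/2:ℝ) ^ 2 = Real.exp 1 := by
    rw [← Real.exp_nat_mul]; norm_num
  have he := Real.exp_one_lt_d9
  refine lt_of_pow_lt_pow_left₀ 2 (by norm_num) ?_
  rw [h]; nlinarith [he]

lemma delta0aux_sin_lower_of_dist (w : ℂ)
    (h : ∀ n : ℤ, Real.sqrt 3 / 2 ≤ ‖w - (n : ℂ) * (Real.pi : ℂ)‖) :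
    Real.exp |w.im| / 4 < ‖Complex.sin w‖ := by
  by_cases hv : 3/8 ≤ |w.im|
  · exact delta0aux_sin_lower_of_im w hv
  push_neg at hv
  set u := w.re with hu
  set v := w.im with hvdef
  set n : ℤ := round (u / Real.pi) with hn
  have hpi := Real.pi_pos
  -- distance bound for this n
  have hd := h n
  have hd2 : 3/4 ≤ (u - n * Real.pi)^2 + v^2 := by
    have h3 : Real.sqrt 3 ^ 2 = 3 := Real.sq_sqrt (by norm_num)
    have habs : ‖w - (n : ℂ) * (Real.pi : ℂ)‖ ^ 2
        = (u - n * Real.pi)^2 + v^2 := by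
      rw [Complex.sq_norm, Complex.normSq_apply]
      simp [Complex.sub_re, Complex.sub_im, Complex.mul_re, Complex.mul_im]
      ring
    nlinarith [hd, Real.sqrt_nonneg 3, norm_nonneg (w - (n : ℂ) * (Real.pi : ℂ))]
  have hr2 : (3/4:ℝ)^2 < (u - n * Real.pi)^2 := by nlinarith [hv, abs_nonneg v, _root_.sq_abs v]
  have hr : 3/4 < |u - n * Real.pi| := by
    nlinarith [abs_nonneg (u - n * Real.pi), _root_.sq_abs (u - n * Real.pi)]
  have hrle : |u - n * Real.pi| ≤ Real.pi / 2 := by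
    have h0 := abs_sub_round (u / Real.pi)
    have heq : u - n * Real.pi = (u / Real.pi - n) * Real.pi := by field_simp
    rw [heq, abs_mul, abs_of_pos hpi]
    calc |u / Real.pi - n| * Real.pi ≤ (1/2) * Real.pi :=
          mul_le_mul_of_nonneg_right h0 hpi.le
      _ = Real.pi / 2 := by ring
  -- |sin u| >= sin(3/4)
  have hsinu : Real.sin (3/4) ≤ |Real.sin u| := by
    set r := u - n * Real.pi with hrdef
    have habs : |Real.sin u| = |Real.sin r| := by
      have : Real.sin u = Real.sin (r + n * Real.pi) := by rw [hrdef]; ring_nf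
      rw [this, Real.sin_add_int_mul_pi, abs_mul]
      have hz : |((-1:ℝ)) ^ n| = 1 := by
        rcases Int.even_or_odd n with he | ho
        · rw [he.neg_one_zpow]; simp
        · rw [Odd.neg_one_zpow ho]; simp
      rw [hz, one_mul]
    have h1 : |Real.sin r| = _root_.abs (Real.sin (_root_.abs r)) := by
      rcases abs_choice r with h' | h'
      · rw [h']
      · rw [h', Real.sin_neg, abs_neg]
    have h2 : _root_.abs (Real.sin (_root_.abs r)) = Real.sin (_root_.abs r) := by
      refine abs_of_nonneg (Real.sin_nonneg_of_nonneg_of_le_pi (abs_nonneg r) ?_)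
      linarith
    have h3 : Real.sin (3/4) ≤ Real.sin |r| :=
      Real.sin_le_sin_of_le_of_le_pi_div_two (by linarith) hrle hr.le
    rw [habs, h1, h2]; exact h3
  have hfin : |Real.sin u| ≤ ‖Complex.sin w‖ := by
    have hsq := delta0aux_abs_sin_sq w
    nlinarith [sq_nonneg (Real.sinh v), norm_nonneg (Complex.sin w), _root_.sq_abs (Real.sin u)]
  have hnum : Real.exp |v| / 4 < Real.sin (3/4) := by
    have hcube := Real.sin_gt_sub_cube (by norm_num : (0:ℝ) < 3/4)
    have hexp : Real.exp |v| < Real.exp (1/2) := Real.exp_lt_exp.2 (by linarith)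
    nlinarith [delta0aux_exp_half_lt]
  calc Real.exp |v| / 4 < Real.sin (3/4) := hnum
    _ ≤ |Real.sin u| := hsinu
    _ ≤ ‖Complex.sin w‖ := hfin

lemma delta0aux_abs_sub_ofReal_eq {a b : ℂ} (hab : ‖a‖ = ‖b‖)
    (hre : a.re = b.re) (c : ℝ) :
    ‖a - (c:ℂ)‖ = ‖b - (c:ℂ)‖ := by
  have key : ∀ w : ℂ, ‖w - (c:ℂ)‖ ^ 2
      = ‖w‖ ^ 2 - 2*c*w.re + c^2 := by
    intro w
    rw [Complex.sq_norm, Complex.sq_norm, Complex.normSq_apply, Complex.normSq_apply]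
    simp [Complex.sub_re, Complex.sub_im]
    ring
  have h2 : ‖a - (c:ℂ)‖ ^ 2 = ‖b - (c:ℂ)‖ ^ 2 := by
    rw [key, key, hab, hre]
  rw [← Real.sqrt_sq (norm_nonneg (a - (c:ℂ))),
    ← Real.sqrt_sq (norm_nonneg (b - (c:ℂ))), h2]

lemma delta0aux_transfer (lam : ℂ) (hlam : lam ≠ 0) (him : 0 ≤ lam.im) (c : ℝ) :
    ‖(-lam) ^ ((1:ℂ)/3) - (c:ℂ)‖ =
    ‖-(Complex.exp (2 * Real.pi * Complex.I / 3) * lam ^ ((1:ℂ)/3)) - (c:ℂ)‖ := by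
  have hpi := Real.pi_pos
  set R := Real.exp (Real.log (‖lam‖) / 3) with hR
  set a := Complex.arg lam with ha
  have hb : (-lam) ^ ((1:ℂ)/3) = Complex.exp (Complex.log (-lam) * (1/3)) :=
    Complex.cpow_def_of_ne_zero (neg_ne_zero.2 hlam) _
  have hE : -(Complex.exp (2 * Real.pi * Complex.I / 3) * lam ^ ((1:ℂ)/3))
      = Complex.exp (2 * Real.pi * Complex.I / 3 + Real.pi * Complex.I
          + Complex.log lam * (1/3)) := by
    rw [Complex.cpow_def_of_ne_zero hlam, Complex.exp_add, Complex.exp_add,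
      Complex.exp_pi_mul_I]
    ring
  -- real/imag parts of the two exponents
  have him_b : (Complex.log (-lam) * (1/3)).im = Complex.arg (-lam) / 3 := by
    simp [Complex.mul_im, Complex.log_im]
    ring
  have hre_b : (Complex.log (-lam) * (1/3)).re = Real.log (‖lam‖) / 3 := by
    simp [Complex.mul_re, Complex.log_re, Complex.log_im]
    ring
  have him_E : (2 * Real.pi * Complex.I / 3 + Real.pi * Complex.I
      + Complex.log lam * (1/3)).im = a/3 + 5*Real.pi/3 := by
    simp [Complex.add_im, Complex.mul_im, Complex.log_im, Complex.div_im, Complex.div_re,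
      Complex.mul_re, Complex.normSq_apply]
    ring
  have hre_E : (2 * Real.pi * Complex.I / 3 + Real.pi * Complex.I
      + Complex.log lam * (1/3)).re = Real.log (‖lam‖) / 3 := by
    simp [Complex.add_re, Complex.mul_re, Complex.log_re, Complex.log_im, Complex.div_re,
      Complex.mul_im, Complex.normSq_apply]
    ring
  -- cos equality
  have hcos : Real.cos (Complex.arg (-lam) / 3) = Real.cos (a/3 + 5*Real.pi/3) := by
    rcases lt_or_eq_of_le him with h0 | h0
    · rw [Complex.arg_neg_eq_arg_sub_pi_of_im_pos h0, ← ha]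
      have : (a - Real.pi)/3 = (a/3 + 5*Real.pi/3) - 2*Real.pi := by ring
      rw [this, Real.cos_sub_two_pi]
    · have him0 : lam.im = 0 := h0.symm
      rcases lt_trichotomy lam.re 0 with hre | hre | hre
      · have h1 : a = Real.pi := Complex.arg_eq_pi_iff.2 ⟨hre, him0⟩
        have h2 : Complex.arg (-lam) = 0 := by
          rw [Complex.arg_eq_zero_iff]
          constructor
          · simp [Complex.neg_re]; linarith
          · simp [Complex.neg_im, him0]
        rw [h2, h1]
        norm_num
        have : Real.pi/3 + 5*Real.pi/3 = 2*Real.pi := by ring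
        rw [this, Real.cos_two_pi]
      · exact absurd (by apply Complex.ext <;> simp [hre, him0]) hlam
      · have h1 : a = 0 := Complex.arg_eq_zero_iff.2 ⟨hre.le, him0⟩
        have h2 : Complex.arg (-lam) = Real.pi := by
          rw [Complex.arg_eq_pi_iff]
          exact ⟨by simp [Complex.neg_re]; linarith, by simp [Complex.neg_im, him0]⟩
        rw [h2, h1]
        have h3 : (0:ℝ)/3 + 5*Real.pi/3 = 2*Real.pi - Real.pi/3 := by ring
        rw [h3, Real.cos_two_pi_sub]
  -- conclude
  apply delta0aux_abs_sub_ofReal_eq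
  · rw [hb, hE, Complex.norm_exp, Complex.norm_exp, hre_b, hre_E]
  · rw [hb, hE, Complex.exp_re, Complex.exp_re, hre_b, hre_E, him_b, him_E, hcos]

set_option maxHeartbeats 1600000

/-- If `λ ≠ 0`, `Im λ ≥ 0`, and `λ` lies outside all discs
`D_n` (`n ≥ 0`) and `D_{−n}` (`n ≥ 1`), then `|Δ₀(λ)| > |e^{(ω²+2)z}|/(24√3|λ|)`,
where `z = λ^{1/3}` and `ω = e^{2πi/3}`. -/
theorem Delta0_lower_bound
    (ω lam : ℂ) (hω : ω = Complex.exp (2 * Real.pi * Complex.I / 3))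
    (hlam : lam ≠ 0) (him : 0 ≤ lam.im)
    (h1 : ∀ n : ℕ,
      1 ≤ ‖lam ^ ((1:ℂ)/3) - ((2 * Real.pi * n / Real.sqrt 3 : ℝ) : ℂ)‖)
    (h2 : ∀ n : ℕ, 1 ≤ n →
      1 ≤ ‖(-lam) ^ ((1:ℂ)/3) - ((2 * Real.pi * n / Real.sqrt 3 : ℝ) : ℂ)‖) :
    ‖Complex.exp ((ω ^ 2 + 2) * lam ^ ((1:ℂ)/3))‖
        / (24 * Real.sqrt 3 * ‖lam‖)
      < ‖Delta0 lam‖ := by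
  have hpi := Real.pi_pos
  set s := Real.sqrt 3 with hsdef
  have hs0 : (0:ℝ) < s := Real.sqrt_pos.2 (by norm_num)
  have hs2 : s^2 = 3 := Real.sq_sqrt (by norm_num)
  have hs1 : 1 ≤ s := by nlinarith
  set z := lam ^ ((1:ℂ)/3) with hzdef
  have hL0 : (0:ℝ) < ‖lam‖ := norm_pos_iff.mpr hlam
  set L := ‖lam‖ with hLdef
  have hzexp : z = Complex.exp (Complex.log lam * (1/3)) :=
    Complex.cpow_def_of_ne_zero hlam _
  set R := Real.exp (Real.log L / 3) with hRdef
  have hR0 : 0 < R := Real.exp_pos _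
  set a := Complex.arg lam with hadef
  have ha0 : 0 ≤ a := Complex.arg_nonneg_iff.2 him
  have hapi : a ≤ Real.pi := Complex.arg_le_pi lam
  have hlogre : (Complex.log lam * (1/3)).re = Real.log L / 3 := by
    simp [Complex.mul_re, Complex.log_re, Complex.log_im]
    ring
  have hlogim : (Complex.log lam * (1/3)).im = a / 3 := by
    simp [Complex.mul_im, Complex.log_im]
    ring
  have hzabs : ‖z‖ = R := by
    rw [hzexp, Complex.norm_exp, hlogre]
  set x := z.re with hxdef
  set y := z.im with hydef
  have hzre : x = R * Real.cos (a/3) := by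
    rw [hxdef, hzexp, Complex.exp_re, hlogre, hlogim]
  have hzim : y = R * Real.sin (a/3) := by
    rw [hydef, hzexp, Complex.exp_im, hlogre, hlogim]
  have hR1 : 1 ≤ R := by
    have h0 := h1 0
    have : ((2 * Real.pi * (0:ℕ) / s : ℝ) : ℂ) = 0 := by push_cast; ring
    rw [this, sub_zero, hzabs] at h0
    exact h0
  have hy0 : 0 ≤ y := by
    rw [hzim]
    exact mul_nonneg hR0.le
      (Real.sin_nonneg_of_nonneg_of_le_pi (by linarith) (by linarith))
  have hcos : 1/2 ≤ Real.cos (a/3) := by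
    have := Real.cos_le_cos_of_nonneg_of_le_pi (by linarith : (0:ℝ) ≤ a/3)
      (by linarith : Real.pi/3 ≤ Real.pi) (by linarith : a/3 ≤ Real.pi/3)
    rwa [Real.cos_pi_div_three] at this
  have hsin : Real.sin (a/3) ≤ s/2 := by
    have := Real.sin_le_sin_of_le_of_le_pi_div_two (by linarith : -(Real.pi/2) ≤ a/3)
      (by linarith : Real.pi/3 ≤ Real.pi/2) (by linarith : a/3 ≤ Real.pi/3)
    rwa [Real.sin_pi_div_three] at this
  have hxR : R/2 ≤ x := by rw [hzre]; nlinarith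
  have hx1 : 1/2 ≤ x := by nlinarith
  have hyx : y ≤ s * x := by rw [hzre, hzim]; nlinarith
  have hxy : x^2 + y^2 = R^2 := by
    have := Complex.sq_norm z
    rw [hzabs, Complex.normSq_apply, ← hxdef, ← hydef] at this
    linarith
  -- omega facts
  have hsc2 : ((s:ℂ))^2 = 3 := by
    rw [← Complex.ofReal_pow, hs2]; norm_num
  have homega : ω = (-1 + (s:ℂ)*I)/2 := by
    rw [hω]
    have h23 : (2 * (Real.pi:ℂ) * I / 3 : ℂ) = ((2*Real.pi/3 : ℝ) : ℂ) * I := by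
      push_cast; ring
    rw [h23, Complex.exp_mul_I, ← Complex.ofReal_cos, ← Complex.ofReal_sin]
    have hc : Real.cos (2*Real.pi/3) = -(1/2) := by
      have h' : (2*Real.pi/3) = Real.pi - Real.pi/3 := by ring
      rw [h', Real.cos_pi_sub, Real.cos_pi_div_three]
    have hsn : Real.sin (2*Real.pi/3) = s/2 := by
      have h' : (2*Real.pi/3) = Real.pi - Real.pi/3 := by ring
      rw [h', Real.sin_pi_sub, Real.sin_pi_div_three, hsdef]
    rw [hc, hsn]
    push_cast
    ring
  have homega2 : ω^2 = (-1 - (s:ℂ)*I)/2 := by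
    rw [homega]
    linear_combination (Complex.I^2/4) * hsc2 + (3/4:ℂ) * Complex.I_sq
  -- the three sine arguments
  set w1 : ℂ := (s:ℂ) * z / 2 with hw1def
  set w2 : ℂ := z * ((-(s:ℂ) + 3*I)/4) with hw2def
  set w3 : ℂ := z * ((-(s:ℂ) - 3*I)/4) with hw3def
  have hw1re : w1.re = s*x/2 := by
    rw [hw1def]
    simp [Complex.div_re, Complex.mul_re, Complex.normSq_apply, ← hxdef, ← hydef]
    try ring
  have hw1im : w1.im = s*y/2 := by
    rw [hw1def]
    simp [Complex.div_im, Complex.mul_im, Complex.normSq_apply, ← hxdef, ← hydef]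
    try ring
  have hc2re : ((-(s:ℂ) + 3*I)/4).re = -s/4 := by
    simp [Complex.div_re, Complex.add_re, Complex.normSq_apply]
    try ring
  have hc2im : ((-(s:ℂ) + 3*I)/4).im = 3/4 := by
    simp [Complex.div_im, Complex.add_im, Complex.normSq_apply]
    try ring
  have hc3re : ((-(s:ℂ) - 3*I)/4).re = -s/4 := by
    simp [Complex.div_re, Complex.sub_re, Complex.normSq_apply]
    try ring
  have hc3im : ((-(s:ℂ) - 3*I)/4).im = -(3/4) := by
    simp [Complex.div_im, Complex.sub_im, Complex.normSq_apply]
    try ring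
  have hw2re : w2.re = (-(s*x) - 3*y)/4 := by
    rw [hw2def, Complex.mul_re, hc2re, hc2im, ← hxdef, ← hydef]; ring
  have hw2im : w2.im = (3*x - s*y)/4 := by
    rw [hw2def, Complex.mul_im, hc2re, hc2im, ← hxdef, ← hydef]; ring
  have hw3re : w3.re = (-(s*x) + 3*y)/4 := by
    rw [hw3def, Complex.mul_re, hc3re, hc3im, ← hxdef, ← hydef]; ring
  have hw3im : w3.im = (-(3*x) - s*y)/4 := by
    rw [hw3def, Complex.mul_im, hc3re, hc3im, ← hxdef, ← hydef]; ring
  -- distance hypotheses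
  have hsub2 : ∀ w : ℂ, ∀ t : ℝ, ‖w - (t:ℂ)‖ ^ 2
      = (w.re - t)^2 + w.im^2 := by
    intro w t
    rw [Complex.sq_norm, Complex.normSq_apply]
    simp [Complex.sub_re, Complex.sub_im]
    ring
  have hw1abs2 : w1.re^2 + w1.im^2 = 3/4 * R^2 := by
    rw [hw1re, hw1im]; linear_combination ((x^2+y^2)/4) * hs2 + (3/4) * hxy
  have hw2abs2 : w2.re^2 + w2.im^2 = 3/4 * R^2 := by
    rw [hw2re, hw2im]; linear_combination ((x^2+y^2)/16) * hs2 + (3/4) * hxy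
  have hsc0 : ((s:ℝ):ℂ) ≠ 0 := by
    simpa using ne_of_gt hs0
  have hsx : 0 ≤ s * x := mul_nonneg hs0.le (by linarith)
  have H1 : ∀ n : ℤ, s / 2 ≤ ‖w1 - (n : ℂ) * (Real.pi : ℂ)‖ := by
    intro n
    obtain ⟨m, rfl | rfl⟩ := Int.eq_nat_or_neg n
    · have hm := h1 m
      have heq : w1 - (((m:ℤ)):ℂ) * (Real.pi : ℂ)
          = ((s/2 : ℝ) : ℂ) * (z - ((2 * Real.pi * m / s : ℝ) : ℂ)) := by
        rw [hw1def]
        push_cast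
        field_simp [hsc0]
      rw [heq, norm_mul, Complex.norm_real, Real.norm_eq_abs, abs_of_pos (by linarith : (0:ℝ) < s/2)]
      calc s/2 = s/2 * 1 := (mul_one _).symm
        _ ≤ s/2 * ‖z - ((2 * Real.pi * m / s : ℝ) : ℂ)‖ :=
            mul_le_mul_of_nonneg_left hm (by linarith)
    · have heq : (((-(m:ℤ) : ℤ) : ℂ)) * (Real.pi : ℂ) = ((-((m:ℝ) * Real.pi) : ℝ) : ℂ) := by
        push_cast; ring
      rw [heq]
      have habs2 := hsub2 w1 (-((m:ℝ) * Real.pi))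
      have hge : (w1.re - (-((m:ℝ) * Real.pi)))^2 + w1.im^2 ≥ 3/4 := by
        rw [hw1re, hw1im]
        have hmp : (0:ℝ) ≤ (m:ℝ) * Real.pi := by positivity
        nlinarith only [hmp, hsx, hs2, hxy, hR1, hR0, sq_nonneg ((m:ℝ)*Real.pi), hy0, hs0, hx1]
      obtain ⟨A, hA⟩ : ∃ A, A = ‖w1 - ((-((m:ℝ) * Real.pi) : ℝ) : ℂ)‖ := ⟨_, rfl⟩
      rw [← hA]
      have hA0 : 0 ≤ A := hA ▸ norm_nonneg _
      have h34 : 3/4 ≤ A^2 := by rw [hA, habs2]; linarith [hge]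
      nlinarith only [hA0, h34, hs2, hs0]
  have hsy : 0 ≤ s * y := mul_nonneg hs0.le hy0
  have H2 : ∀ n : ℤ, s / 2 ≤ ‖w2 - (n : ℂ) * (Real.pi : ℂ)‖ := by
    intro n
    have hposcase : ∀ t : ℝ, 0 ≤ t → s / 2 ≤ ‖w2 - ((t : ℝ) : ℂ)‖ := by
      intro t ht
      have habs2 := hsub2 w2 t
      have hge : 3/4 ≤ (w2.re - t)^2 + w2.im^2 := by
        rw [hw2re, hw2im]
        have hsy3 : 0 ≤ s*x + 3*y := by linarith
        nlinarith only [ht, hsy3, hs2, hxy, hR1, sq_nonneg t, hs0]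
      obtain ⟨A, hA⟩ : ∃ A, A = ‖w2 - ((t : ℝ) : ℂ)‖ := ⟨_, rfl⟩
      rw [← hA]
      have hA0 : 0 ≤ A := hA ▸ norm_nonneg _
      have h34 : 3/4 ≤ A^2 := by rw [hA, habs2]; linarith [hge]
      nlinarith only [hA0, h34, hs2, hs0]
    obtain ⟨m, rfl | rfl⟩ := Int.eq_nat_or_neg n
    · have heq : ((((m:ℤ)):ℂ)) * (Real.pi : ℂ) = (((m:ℝ) * Real.pi : ℝ) : ℂ) := by
        push_cast; ring
      rw [heq]
      exact hposcase ((m:ℝ) * Real.pi) (by positivity)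
    · rcases Nat.eq_zero_or_pos m with hm0 | hm1
      · subst hm0
        have heq : (((-(0:ℕ) : ℤ)):ℂ) * (Real.pi : ℂ) = (((0:ℝ)) : ℂ) := by
          push_cast; ring
        rw [heq]
        exact hposcase 0 le_rfl
      · have hc := delta0aux_transfer lam hlam him (2 * Real.pi * m / s)
        have hm' := h2 m hm1
        rw [hc, ← hω] at hm'
        have heq : w2 - ((-(m:ℤ) : ℤ) : ℂ) * (Real.pi : ℂ)
            = (-((s/2:ℝ):ℂ)) * (-(ω * z) - ((2 * Real.pi * m / s : ℝ):ℂ)) := by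
          rw [hw2def, homega]
          push_cast
          field_simp [hsc0]
          linear_combination (-(4:ℂ) * z * Complex.I) * hsc2
        rw [heq, norm_mul]
        have habs : ‖-((s/2:ℝ):ℂ)‖ = s/2 := by
          rw [norm_neg, Complex.norm_real, Real.norm_eq_abs, abs_of_pos (by linarith : (0:ℝ) < s/2)]
        rw [habs]
        calc s/2 = s/2 * 1 := (mul_one _).symm
          _ ≤ s/2 * ‖-(ω * z) - ((2 * Real.pi * m / s : ℝ):ℂ)‖ :=
              mul_le_mul_of_nonneg_left hm' (by linarith)
  have him3 : 3/8 ≤ |w3.im| := by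
    rw [hw3im, abs_of_nonpos (by linarith : (-(3*x) - s*y)/4 ≤ 0)]
    linarith
  have hB1 := delta0aux_sin_lower_of_dist w1 H1
  have hB2 := delta0aux_sin_lower_of_dist w2 H2
  have hB3 := delta0aux_sin_lower_of_im w3 him3
  -- absolute values of imaginary parts
  have ht1 : |w1.im| = s*y/2 := by
    rw [hw1im, _root_.abs_of_nonneg (by positivity : (0:ℝ) ≤ s*y/2)]
  have hsyx : s*y ≤ 3*x := by nlinarith only [hyx, hs0, hs2, hy0]
  have ht2 : |w2.im| = (3*x - s*y)/4 := by
    rw [hw2im, _root_.abs_of_nonneg (by linarith : (0:ℝ) ≤ (3*x - s*y)/4)]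
  have ht3 : |w3.im| = (3*x + s*y)/4 := by
    rw [hw3im, abs_of_nonpos (by linarith : (-(3*x) - s*y)/4 ≤ 0)]
    ring
  -- real part of the exponent
  have homre : (ω^2 + 2).re = 3/2 := by
    rw [homega2]
    simp [Complex.add_re, Complex.div_re, Complex.sub_re, Complex.normSq_apply]
    ring
  have homim : (ω^2 + 2).im = -(s/2) := by
    rw [homega2]
    simp [Complex.add_im, Complex.div_im, Complex.sub_im, Complex.normSq_apply]
    ring
  have hT : ((ω^2 + 2) * z).re = |w1.im| + (|w2.im| + |w3.im|) := by
    rw [Complex.mul_re, homre, homim, ← hxdef, ← hydef, ht1, ht2, ht3]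
    ring
  -- factorization of the cosh - cos term
  have hfact : Complex.cosh (3 * z / 2) - Complex.cos ((s:ℂ) * z / 2)
      = 2 * Complex.sin w2 * Complex.sin w3 := by
    rw [← Complex.cos_mul_I, Complex.cos_sub_cos]
    have e1 : (3 * z / 2 * I + (s:ℂ) * z / 2) / 2 = -w3 := by
      rw [hw3def]; ring
    have e2 : (3 * z / 2 * I - (s:ℂ) * z / 2) / 2 = w2 := by
      rw [hw2def]; ring
    rw [e1, e2, Complex.sin_neg]
    ring
  have hDelta : ‖Delta0 lam‖
      = 4/(3*s*L) * (‖Complex.sin w1‖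
          * (2 * ‖Complex.sin w2‖ * ‖Complex.sin w3‖)) := by
    have hunf : Delta0 lam = 4 / (3 * (s:ℂ) * lam) * Complex.sin w1
        * (2 * Complex.sin w2 * Complex.sin w3) := by
      rw [Delta0, ← hsdef, ← hzdef, ← hw1def, hfact]
    rw [hunf, norm_mul, norm_mul, norm_div, norm_mul, norm_mul, norm_mul, norm_mul]
    simp only [Complex.norm_real, Real.norm_eq_abs, Complex.norm_two, ← hLdef, norm_ofNat]
    rw [abs_of_pos hs0]
    ring
  -- final assembly
  have hP : Real.exp (((ω^2 + 2) * z).re) / 64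
      < ‖Complex.sin w1‖
        * (‖Complex.sin w2‖ * ‖Complex.sin w3‖) := by
    have e1 : Real.exp (((ω^2 + 2) * z).re)
        = Real.exp |w1.im| * (Real.exp |w2.im| * Real.exp |w3.im|) := by
      rw [hT, Real.exp_add, Real.exp_add]
    have hstep : Real.exp |w1.im|/4 * (Real.exp |w2.im|/4 * (Real.exp |w3.im|/4))
        < ‖Complex.sin w1‖
          * (‖Complex.sin w2‖ * ‖Complex.sin w3‖) := by
      refine mul_lt_mul'' hB1 (mul_lt_mul'' hB2 hB3 (by positivity) (by positivity))
        (by positivity) (by positivity)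
    have e4 : Real.exp (((ω^2 + 2) * z).re) / 64
        = Real.exp |w1.im|/4 * (Real.exp |w2.im|/4 * (Real.exp |w3.im|/4)) := by
      rw [e1]; ring
    rw [e4]
    exact hstep
  rw [hDelta, Complex.norm_exp]
  have e2 : Real.exp (((ω^2 + 2) * z).re) / (24*s*L)
      = (Real.exp (((ω^2 + 2) * z).re) / 64) * (8/(3*s*L)) := by
    field_simp
    ring
  have e3 : 4/(3*s*L) * (‖Complex.sin w1‖
        * (2 * ‖Complex.sin w2‖ * ‖Complex.sin w3‖))
      = (‖Complex.sin w1‖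
          * (‖Complex.sin w2‖ * ‖Complex.sin w3‖)) * (8/(3*s*L)) := by
    ring
  rw [e2, e3]
  exact mul_lt_mul_of_pos_right hP (by positivity)
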